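/- Let Q ⊂ ℝ^d be a bounded convex set with nonempty interior and let φ : ℝ^d → ℝ be bounded, vanish outside Q, and be α-Hölder on Q for some α ∈ (0,1] (i.e. |φ(x) − φ(y)| ≤ L|x − y|^α for x, y ∈ Q). Then φ belongs to the Nikol'ski class H_s with s = min(α, 1/2): there is a constant C such that for all u ∈ ℝ^d, ∫_{ℝ^d} (φ(x + u) − φ(x))^2 dx ≤ C·|u|^{2·min(α,1/2)}. -/

import Mathlib

open MeasureTheory Pointwise

lemma steiner_pow (d : ℕ) {t r : ℝ} (ht : 0 ≤ t) (hr0 : 0 ≤ r) (hr1 : r ≤ 1) :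
    (1 + t * r) ^ d ≤ 1 + ((1 + t) ^ d - 1) * r := by
  induction d with
  | zero => simp
  | succ n ih =>
    have h1 : (1:ℝ) ≤ (1 + t) ^ n := one_le_pow₀ (by linarith)
    have h2 : (0:ℝ) ≤ 1 + t * r := by nlinarith
    have h3 : (0:ℝ) < 1 + t := by linarith
    have h4 : (0:ℝ) ≤ (1 + t) ^ n := by positivity
    rw [pow_succ, pow_succ]
    nlinarith [mul_le_mul_of_nonneg_right ih h2, mul_nonneg (mul_nonneg ht hr0) (sub_nonneg.2 h1),
      mul_nonneg (mul_nonneg ht (sub_nonneg.2 hr1)) (sub_nonneg.2 h1),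
      mul_nonneg (mul_nonneg (mul_nonneg ht hr0) (sub_nonneg.2 hr1)) (sub_nonneg.2 h1)]

set_option maxHeartbeats 1000000 in
/-- A bounded function vanishing outside a bounded convex set `Q` (with
nonempty interior) that is `α`-Hölder on `Q` belongs to the Nikol'ski class
`H_{min(α,1/2)}`. -/
theorem stmt_8 (d : ℕ) (Q : Set (Fin d → ℝ))
    (hQconv : Convex ℝ Q) (hQbdd : Bornology.IsBounded Q)
    (hQint : (interior Q).Nonempty)
    (φ : (Fin d → ℝ) → ℝ) (B : ℝ) (hφb : ∀ x, |φ x| ≤ B)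
    (hsupp : ∀ x ∉ Q, φ x = 0)
    (α L : ℝ) (hα0 : 0 < α) (hα1 : α ≤ 1) (hL : 0 ≤ L)
    (hHol : ∀ x ∈ Q, ∀ y ∈ Q, |φ x - φ y| ≤ L * ‖x - y‖ ^ α) :
    ∃ C : ℝ, ∀ u : Fin d → ℝ,
      ∫ x, (φ (x + u) - φ x) ^ 2 ≤ C * ‖u‖ ^ (2 * min α (1 / 2)) := by
  classical
  have hB : 0 ≤ B := (abs_nonneg _).trans (hφb 0)
  -- a closed ball inside `Q`
  obtain ⟨x₀, hx₀⟩ := hQint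
  obtain ⟨ε₀, hε₀pos, hball⟩ := Metric.isOpen_iff.1 isOpen_interior x₀ hx₀
  set ε : ℝ := ε₀ / 2 with hεdef
  have hεpos : 0 < ε := by positivity
  have hcb : Metric.closedBall x₀ ε ⊆ Q := fun y hy =>
    interior_subset (hball (lt_of_le_of_lt (Metric.mem_closedBall.1 hy) (by
      rw [hεdef]; linarith)))
  -- measure facts
  have hQnm : NullMeasurableSet Q (volume : Measure (Fin d → ℝ)) := hQconv.nullMeasurableSet volume
  have hQfin : volume Q ≠ ⊤ :=
    ne_of_lt (lt_of_le_of_lt (measure_mono subset_closure)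
      hQbdd.isCompact_closure.measure_lt_top)
  set m : ℝ := (volume Q).toReal with hm
  have hm0 : 0 ≤ m := ENNReal.toReal_nonneg
  set K : ℝ := (1 + 1/ε)^d - 1 with hK
  have hK0 : 0 ≤ K := by
    have h1 : (1:ℝ) ≤ (1 + 1/ε)^d := one_le_pow₀ (by
      have : 0 < 1/ε := by positivity
      linarith)
    rw [hK]; linarith
  set K' : ℝ := max K 1 with hK'
  have hK'1 : 1 ≤ K' := le_max_right _ _
  have hK'K : K ≤ K' := le_max_left _ _
  set s2 : ℝ := 2 * min α (1/2) with hs2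
  have hmin : 0 < min α (1/2) := lt_min hα0 (by norm_num)
  have hs2pos : 0 < s2 := by rw [hs2]; linarith
  have hs2le1 : s2 ≤ 1 := by
    have : min α (1/2) ≤ 1/2 := min_le_right _ _
    rw [hs2]; linarith
  -- continuity and a.e. measurability of φ
  have hcont : ContinuousOn φ Q := by
    have h : HolderOnWith (Real.toNNReal L) (Real.toNNReal α) φ Q := by
      intro x hx y hy
      rw [edist_dist, edist_dist, Real.dist_eq, dist_eq_norm]
      calc ENNReal.ofReal |φ x - φ y| ≤ ENNReal.ofReal (L * ‖x - y‖ ^ α) :=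
            ENNReal.ofReal_le_ofReal (hHol x hx y hy)
        _ = ((Real.toNNReal L : ENNReal)) * ENNReal.ofReal ‖x - y‖ ^ ((Real.toNNReal α : ℝ)) := by
            rw [ENNReal.ofReal_mul hL, ← ENNReal.ofReal_rpow_of_nonneg (norm_nonneg _) hα0.le,
              Real.coe_toNNReal _ hα0.le]
            rfl
    exact h.continuousOn (by simpa using hα0)
  have hφae0 : φ =ᵐ[(volume : Measure (Fin d → ℝ))] (interior Q).indicator φ := by
    have hsub : {x | φ x = (interior Q).indicator φ x}ᶜ ⊆ frontier Q := by
      intro x hx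
      simp only [Set.mem_compl_iff, Set.mem_setOf_eq] at hx
      by_contra hxf
      apply hx
      by_cases hxi : x ∈ interior Q
      · rw [Set.indicator_of_mem hxi]
      · rw [Set.indicator_of_notMem hxi]
        exact hsupp x fun hxQ => hxf ⟨subset_closure hxQ, hxi⟩
    exact mem_ae_iff.2 (measure_mono_null hsub (hQconv.addHaar_frontier _))
  have hφm : AEMeasurable φ (volume : Measure (Fin d → ℝ)) := by
    have h1 : AEMeasurable ((interior Q).indicator φ) (volume : Measure (Fin d → ℝ)) :=
      (aemeasurable_indicator_iff measurableSet_interior).2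
        ((hcont.mono interior_subset).aemeasurable measurableSet_interior)
    exact h1.congr hφae0.symm
  -- the constant
  refine ⟨(L^2 + (2*B)^2) * m + (2*B)^2 * (2 * K' * m), fun u => ?_⟩
  by_cases hu : u = 0
  · subst hu
    calc ∫ x, (φ (x + 0) - φ x)^2 = 0 := by simp
      _ ≤ ((L^2 + (2*B)^2) * m + (2*B)^2 * (2 * K' * m)) * ‖(0 : Fin d → ℝ)‖ ^ s2 := by
          rw [norm_zero, Real.zero_rpow hs2pos.ne', mul_zero]
  -- main case : u ≠ 0
  have hr : 0 < ‖u‖ := norm_pos_iff.2 hu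
  set r := ‖u‖ with hrdef
  set t := r / ε with htdef
  have htpos : 0 < t := div_pos hr hεpos
  have h1t : (0:ℝ) < 1 + t := by linarith
  -- the fattened set A and its measure
  set A := Q + Metric.closedBall (0 : Fin d → ℝ) r with hA
  have hQA : Q ⊆ A := fun q hq => by
    rw [hA, Set.mem_add]
    exact ⟨q, hq, 0, Metric.mem_closedBall_self hr.le, add_zero q⟩
  have hAhom : A ⊆ AffineMap.homothety x₀ (1 + t) '' Q := by
    rintro z hz
    rw [hA, Set.mem_add] at hz
    obtain ⟨q, hq, b, hb, rfl⟩ := hz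
    rw [Metric.mem_closedBall, dist_zero_right] at hb
    have hb' : x₀ + (1/t) • b ∈ Q := by
      apply hcb
      rw [Metric.mem_closedBall, dist_eq_norm, add_sub_cancel_left, norm_smul]
      have h5 : ‖(1/t : ℝ)‖ = 1/t := abs_of_pos (by positivity)
      rw [h5]
      calc (1/t) * ‖b‖ ≤ (1/t) * r := by gcongr
        _ = ε := by rw [htdef]; field_simp
    refine ⟨(1/(1+t)) • q + (t/(1+t)) • (x₀ + (1/t) • b), ?_, ?_⟩
    · exact hQconv hq hb' (by positivity) (by positivity) (by field_simp)
    · rw [AffineMap.homothety_apply]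
      simp only [vsub_eq_sub, vadd_eq_add]
      match_scalars <;> field_simp <;> ring
  have hμA : volume A ≤ ENNReal.ofReal ((1 + t)^d) * volume Q := by
    refine (measure_mono hAhom).trans ?_
    rw [Measure.addHaar_image_homothety]
    have hfr : Module.finrank ℝ (Fin d → ℝ) = d := Module.finrank_fin_fun ℝ
    rw [hfr, abs_of_nonneg (by positivity : (0:ℝ) ≤ (1+t)^d)]
  have hAfin : volume A ≠ ⊤ := by
    refine ne_of_lt (lt_of_le_of_lt hμA ?_)
    exact ENNReal.mul_lt_top ENNReal.ofReal_lt_top hQfin.lt_top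
  -- the sets P, S, T
  set P := (fun x : Fin d → ℝ => x + u) ⁻¹' Q with hP
  have hμP : volume P = volume Q := measure_preimage_add_right volume u Q
  set S := Q ∩ P with hS
  set T := (Q ∪ P) \ S with hT
  have hμT2 : volume T ≤ volume Q + volume Q := by
    refine (measure_mono (Set.diff_subset.trans (Set.Subset.refl _))).trans ?_
    refine (measure_union_le _ _).trans ?_
    rw [hμP]
  have hTfin : volume T ≠ ⊤ :=
    ne_of_lt (lt_of_le_of_lt hμT2 (ENNReal.add_lt_top.2 ⟨hQfin.lt_top, hQfin.lt_top⟩))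
  -- T is inside two translates of A \ Q
  have hDsub : T ⊆ ((fun x : Fin d → ℝ => x + u) ⁻¹' (A \ Q)) ∪ (A \ Q) := by
    rintro x ⟨hxQP, hxS⟩
    by_cases hxQ : x ∈ Q
    · have hxP : x ∉ P := fun h => hxS ⟨hxQ, h⟩
      left
      refine ⟨?_, hxP⟩
      rw [hA, Set.mem_add]
      refine ⟨x, hxQ, u, ?_, rfl⟩
      rw [Metric.mem_closedBall, dist_zero_right]
    · have hxP : x ∈ P := hxQP.resolve_left hxQ
      right
      refine ⟨?_, hxQ⟩
      rw [hA, Set.mem_add]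
      refine ⟨x + u, hxP, -u, ?_, by abel⟩
      rw [Metric.mem_closedBall, dist_zero_right, norm_neg]
  have hμT : volume T ≤ 2 * volume (A \ Q) := by
    refine (measure_mono hDsub).trans ((measure_union_le _ _).trans ?_)
    rw [measure_preimage_add_right, two_mul]
  have hDQ : volume (A \ Q) = volume A - volume Q := measure_diff hQA hQnm hQfin
  -- real-valued bound on the measure of T
  have hμTr : (volume T).toReal ≤ 2 * K' * m * r ^ s2 := by
    have hDfin : volume (A \ Q) ≠ ⊤ := ne_of_lt (lt_of_le_of_lt (measure_mono Set.diff_subset) hAfin.lt_top)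
    rcases le_or_gt r 1 with hr1 | hr1
    · have hrs : r ≤ r ^ s2 := by
        have h6 := Real.rpow_le_rpow_of_exponent_ge hr hr1 hs2le1
        rwa [Real.rpow_one] at h6
      have hpow : (1 + t)^d ≤ 1 + K * r := by
        have h1 : (1 + t) = 1 + (1/ε) * r := by rw [htdef]; ring
        rw [h1, hK]
        exact steiner_pow d (by positivity) hr.le hr1
      have hAle : (volume A).toReal ≤ (1 + K*r) * m := by
        have h2 : volume A ≤ ENNReal.ofReal (1 + K*r) * volume Q :=
          hμA.trans (mul_le_mul_left (ENNReal.ofReal_le_ofReal hpow) _)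
        have h3 := ENNReal.toReal_mono
          (ENNReal.mul_ne_top ENNReal.ofReal_ne_top hQfin) h2
        rwa [ENNReal.toReal_mul, ENNReal.toReal_ofReal (by positivity)] at h3
      have hDr : (volume (A \ Q)).toReal ≤ K * r * m := by
        rw [hDQ, ENNReal.toReal_sub_of_le (measure_mono hQA) hAfin]
        nlinarith
      calc (volume T).toReal ≤ (2 * volume (A \ Q)).toReal :=
            ENNReal.toReal_mono (ENNReal.mul_ne_top (by simp) hDfin) hμT
        _ = 2 * (volume (A \ Q)).toReal := by
            rw [ENNReal.toReal_mul]; norm_num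
        _ ≤ 2 * (K * r * m) := by linarith
        _ ≤ 2 * K' * m * r ^ s2 := by
            have h12 : K * r ≤ K' * r ^ s2 :=
              mul_le_mul hK'K hrs hr.le (le_trans zero_le_one hK'1)
            have h13 := mul_le_mul_of_nonneg_right h12 hm0
            linarith
    · have hrs : 1 ≤ r ^ s2 := by
        have h6 := Real.rpow_le_rpow zero_le_one hr1.le hs2pos.le
        rwa [Real.one_rpow] at h6
      have h1 : (volume T).toReal ≤ 2 * m := by
        have h7 := ENNReal.toReal_mono (ENNReal.add_ne_top.2 ⟨hQfin, hQfin⟩) hμT2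
        rw [ENNReal.toReal_add hQfin hQfin] at h7
        linarith
      nlinarith [mul_nonneg hm0 (sub_nonneg.2 hrs)]
  -- integral bound
  set c₁ := min ((L * r ^ α)^2) ((2*B)^2) with hc₁
  set c₂ := (2*B)^2 with hc₂
  have hc₁0 : 0 ≤ c₁ := le_min (sq_nonneg _) (sq_nonneg _)
  have hc₂0 : 0 ≤ c₂ := sq_nonneg _
  set S' := toMeasurable (volume : Measure (Fin d → ℝ)) S with hS'
  set T' := toMeasurable (volume : Measure (Fin d → ℝ)) T with hT'
  have hμS'fin : volume S' < ⊤ := by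
    rw [hS', measure_toMeasurable]
    exact lt_of_le_of_lt (measure_mono Set.inter_subset_left) hQfin.lt_top
  have hμT'fin : volume T' < ⊤ := by
    rw [hT', measure_toMeasurable]
    exact lt_of_le_of_lt hμT2 (ENNReal.add_lt_top.2 ⟨hQfin.lt_top, hQfin.lt_top⟩)
  have hint1 : Integrable (S'.indicator fun _ => c₁) volume := by
    rw [integrable_indicator_iff (measurableSet_toMeasurable _ _)]
    exact integrableOn_const hμS'fin.ne
  have hint2 : Integrable (T'.indicator fun _ => c₂) volume := by
    rw [integrable_indicator_iff (measurableSet_toMeasurable _ _)]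
    exact integrableOn_const hμT'fin.ne
  have hg := hint1.add hint2
  have hfg : ∀ x, (φ (x + u) - φ x)^2 ≤
      S'.indicator (fun _ => c₁) x + T'.indicator (fun _ => c₂) x := by
    intro x
    have hind1 : 0 ≤ S'.indicator (fun _ => c₁) x := Set.indicator_nonneg (fun _ _ => hc₁0) x
    have hind2 : 0 ≤ T'.indicator (fun _ => c₂) x := Set.indicator_nonneg (fun _ _ => hc₂0) x
    have habs2 : |φ (x+u) - φ x| ≤ 2*B := by
      have h1 := hφb (x+u)
      have h2 := hφb x
      have h3 := abs_add_le (φ (x+u)) (-(φ x))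
      rw [abs_neg] at h3
      rw [sub_eq_add_neg]
      linarith
    have hsq2 : (φ (x+u) - φ x)^2 ≤ c₂ := by
      obtain ⟨ha, hb⟩ := abs_le.1 habs2
      exact sq_le_sq' (by linarith) hb
    by_cases hxS : x ∈ S
    · have hsq1 : (φ (x + u) - φ x)^2 ≤ c₁ := by
        refine le_min ?_ hsq2
        have hH := hHol (x+u) hxS.2 x hxS.1
        rw [add_sub_cancel_left] at hH
        obtain ⟨ha, hb⟩ := abs_le.1 hH
        exact sq_le_sq' (by linarith) hb
      have he : S'.indicator (fun _ => c₁) x = c₁ :=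
        Set.indicator_of_mem (subset_toMeasurable _ _ hxS) _
      rw [he]
      linarith
    · by_cases hxQP : x ∈ Q ∪ P
      · have hxT : x ∈ T := ⟨hxQP, hxS⟩
        have he : T'.indicator (fun _ => c₂) x = c₂ :=
          Set.indicator_of_mem (subset_toMeasurable _ _ hxT) _
        rw [he]
        linarith
      · have hxQ : x ∉ Q := fun h => hxQP (Or.inl h)
        have hxP : x ∉ P := fun h => hxQP (Or.inr h)
        have h8 : φ (x + u) = 0 := hsupp _ hxP
        rw [h8, hsupp x hxQ]
        simpa using add_nonneg hind1 hind2
  have hfmeas : AEStronglyMeasurable (fun x => (φ (x + u) - φ x)^2)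
      (volume : Measure (Fin d → ℝ)) := by
    have h1 : AEMeasurable (fun x : Fin d → ℝ => φ (x + u)) volume :=
      hφm.comp_quasiMeasurePreserving
        (measurePreserving_add_right volume u).quasiMeasurePreserving
    exact ((h1.sub hφm).pow_const 2).aestronglyMeasurable
  have hfint : Integrable (fun x => (φ (x + u) - φ x)^2) volume :=
    hg.mono' hfmeas (Filter.Eventually.of_forall fun x => by
      rw [Real.norm_eq_abs, abs_of_nonneg (sq_nonneg _)]
      exact hfg x)
  have hIb : ∫ x, (φ (x + u) - φ x)^2 ≤ c₁ * m + c₂ * (volume T).toReal := by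
    calc ∫ x, (φ (x + u) - φ x)^2
        ≤ ∫ x, (S'.indicator (fun _ => c₁) x + T'.indicator (fun _ => c₂) x) :=
          integral_mono hfint hg hfg
      _ = (volume S').toReal • c₁ + (volume T').toReal • c₂ := by
          rw [integral_add hint1 hint2,
            integral_indicator_const _ (measurableSet_toMeasurable _ _),
            integral_indicator_const _ (measurableSet_toMeasurable _ _)]
          rfl
      _ ≤ c₁ * m + c₂ * (volume T).toReal := by
          rw [hS', hT', measure_toMeasurable, measure_toMeasurable, smul_eq_mul, smul_eq_mul]
          have hSm : (volume S).toReal ≤ m :=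
            ENNReal.toReal_mono hQfin (measure_mono Set.inter_subset_left)
          have h2 : (0:ℝ) ≤ (volume S).toReal := ENNReal.toReal_nonneg
          nlinarith
  -- bound c₁
  have hc₁r : c₁ ≤ (L^2 + (2*B)^2) * r ^ s2 := by
    rcases le_or_gt r 1 with hr1 | hr1
    · have h1 : r ^ α ≤ r ^ min α (1/2) :=
        Real.rpow_le_rpow_of_exponent_ge hr hr1 (min_le_left _ _)
      have h2 : (r ^ min α (1/2))^2 = r ^ s2 := by
        rw [← Real.rpow_natCast (r ^ min α (1/2)) 2, ← Real.rpow_mul hr.le, hs2]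
        norm_num [mul_comm]
      have h3 : (L * r ^ α)^2 ≤ L^2 * r ^ s2 := by
        rw [mul_pow, ← h2]
        have h4 := pow_le_pow_left₀ (Real.rpow_nonneg hr.le α) h1 2
        nlinarith [sq_nonneg L]
      refine (min_le_left _ _).trans (h3.trans ?_)
      nlinarith [Real.rpow_nonneg hr.le s2, sq_nonneg (2*B)]
    · have hrs : 1 ≤ r ^ s2 := by
        have h6 := Real.rpow_le_rpow zero_le_one hr1.le hs2pos.le
        rwa [Real.one_rpow] at h6
      refine (min_le_right _ _).trans ?_
      nlinarith [sq_nonneg L, sq_nonneg (2*B)]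
  -- conclusion
  calc ∫ x, (φ (x + u) - φ x)^2 ≤ c₁ * m + c₂ * (volume T).toReal := hIb
    _ ≤ ((L^2 + (2*B)^2) * r ^ s2) * m + c₂ * (2 * K' * m * r ^ s2) := by
        have h10 : c₂ * (volume T).toReal ≤ c₂ * (2 * K' * m * r ^ s2) :=
          mul_le_mul_of_nonneg_left hμTr hc₂0
        have h11 : c₁ * m ≤ ((L^2 + (2*B)^2) * r ^ s2) * m :=
          mul_le_mul_of_nonneg_right hc₁r hm0
        linarith [h10, h11]
    _ = ((L^2 + (2*B)^2) * m + c₂ * (2 * K' * m)) * r ^ s2 := by ring
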